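/- Let T be a π-increasing tree, V_1 a nonempty proper subset of V(T) that is a union of blocks of π, and v_1 ∈ V_1. Then T can be written as T = splice(T_1, v_1; T_2, v_2) for π-increasing trees T_1, T_2 with vertex sets V_1 and V(T) \ V_1 and some vertex v_2 ∈ V(T) \ V_1, if and only if V_1 is a union of vertex sets of connected components of the v_1-dependence graph G_{v_1}(T). When this holds, T_1, T_2 and v_2 are unique, and v_2 is the first element of V(T) \ V_1 on the chain from v_1 to the root of T. -/
import Mathlib


open scoped Classical

/-- An unordered increasing tree on a finite set of positive integers,
given by its vertex set and parent function: the root is the minimum vertex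
and is fixed by `parent`, and every nonroot vertex has a parent in the tree
with strictly smaller label (so labels increase away from the root). -/
structure ITree : Type where
  verts : Finset ℕ
  parent : ℕ → ℕ
  pos : ∀ v ∈ verts, 0 < v
  parent_root : ∀ v ∈ verts, (∀ u ∈ verts, v ≤ u) → parent v = v
  parent_lt : ∀ v ∈ verts, ¬(∀ u ∈ verts, v ≤ u) → parent v ∈ verts ∧ parent v < v

/-- `a` is an ancestor of `v` in `T` (this includes `a = v`): some iterate of
the parent function sends `v` to `a`. -/
def Ancestor (T : ITree) (a v : ℕ) : Prop := ∃ k : ℕ, T.parent^[k] v = a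

/-- The chain from the root of `T` to `v`: the set of ancestors of `v`. -/
noncomputable def chain (T : ITree) (v : ℕ) : Finset ℕ :=
  T.verts.filter (fun a => Ancestor T a v)

/-- The number of sons of the vertex `i` in `T`. -/
noncomputable def sons (T : ITree) (i : ℕ) : ℕ :=
  (T.verts.filter (fun v => v ≠ i ∧ T.parent v = i)).card

/-- `R = splice(T₁, v₁; T₂, v₂)`: the increasing tree on the union of the
vertex sets obtained by merging the chain from the root of `T₁` to `v₁` with
the chain from the root of `T₂` to `v₂` into a single increasing chain
(each chain vertex having as parent its predecessor in the merged chain),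
all other vertices keeping their parent.  This is exactly the interleaving of
the `v₁`-decomposition of `T₁` and the `v₂`-decomposition of `T₂` so that the
roots along the resulting chain increase. -/
def IsSplice (T₁ : ITree) (v₁ : ℕ) (T₂ : ITree) (v₂ : ℕ) (R : ITree) : Prop :=
  R.verts = T₁.verts ∪ T₂.verts ∧
  (∀ w ∈ T₁.verts, w ∉ chain T₁ v₁ ∪ chain T₂ v₂ → R.parent w = T₁.parent w) ∧
  (∀ w ∈ T₂.verts, w ∉ chain T₁ v₁ ∪ chain T₂ v₂ → R.parent w = T₂.parent w) ∧
  (∀ w ∈ chain T₁ v₁ ∪ chain T₂ v₂,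
    ∀ h : ((chain T₁ v₁ ∪ chain T₂ v₂).filter (· < w)).Nonempty,
      R.parent w = ((chain T₁ v₁ ∪ chain T₂ v₂).filter (· < w)).max' h)

/-- `π` is a set partition of a set of positive integers: its blocks are
nonempty, consist of positive integers, and are pairwise disjoint. -/
def IsPartition (π : Finset (Finset ℕ)) : Prop :=
  (∀ B ∈ π, B.Nonempty) ∧ (∀ B ∈ π, ∀ b ∈ B, 0 < b) ∧
    (∀ B ∈ π, ∀ B' ∈ π, B ≠ B' → Disjoint B B')

/-- `T` is a `π`-increasing tree: its vertex set is a union of blocks of `π`,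
and every block contained in the vertex set forms a chain of ancestors in `T`
(for `i < j` in the same block, `i` is an ancestor of `j`). -/
def PiIncreasing (π : Finset (Finset ℕ)) (T : ITree) : Prop :=
  (∀ v ∈ T.verts, ∃ B ∈ π, v ∈ B ∧ B ⊆ T.verts) ∧
  (∀ B ∈ π, B ⊆ T.verts → ∀ i ∈ B, ∀ j ∈ B, i ≤ j → Ancestor T i j)

/-- The edge relation of the `v`-dependence graph `G_v(T)` (on the blocks of
`π` contained in `V(T)`): there is an edge from `B` to `B'` when the maximum
`μ` of `B` does not lie on the chain from the root of `T` to `v`, and the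
piece of the `v`-decomposition of `T` containing `μ` (as a nonroot vertex) is
rooted at a vertex `a ∈ B'`; the root `a` of that piece is the largest
ancestor of `v` which is also an ancestor of `μ`. -/
def DepEdge (π : Finset (Finset ℕ)) (T : ITree) (v : ℕ) (B B' : Finset ℕ) : Prop :=
  B ∈ π ∧ B' ∈ π ∧ B ⊆ T.verts ∧ B' ⊆ T.verts ∧
  ∃ hB : B.Nonempty, ¬ Ancestor T (B.max' hB) v ∧
    ∃ a ∈ B', Ancestor T a v ∧ Ancestor T a (B.max' hB) ∧
      ∀ w, Ancestor T w v → Ancestor T w (B.max' hB) → w ≤ a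

/-- The `v`-dependence graph `G_v(T)` is connected: any two blocks of `π`
contained in `V(T)` are related by the equivalence closure of the edge
relation. -/
def DepConnected (π : Finset (Finset ℕ)) (T : ITree) (v : ℕ) : Prop :=
  ∀ B ∈ π, B ⊆ T.verts → ∀ B' ∈ π, B' ⊆ T.verts →
    Relation.EqvGen (DepEdge π T v) B B'

/-! ### Auxiliary lemmas -/

section Aux

lemma parent_mem_lt (T : ITree) {v u : ℕ} (hv : v ∈ T.verts) (hu : u ∈ T.verts) (huv : u < v) :
    T.parent v ∈ T.verts ∧ T.parent v < v :=
  T.parent_lt v hv (fun h => absurd (h u hu) (by omega))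

lemma iterate_mem_le (T : ITree) {v : ℕ} (hv : v ∈ T.verts) (k : ℕ) :
    T.parent^[k] v ∈ T.verts ∧ T.parent^[k] v ≤ v := by
  induction k with
  | zero => exact ⟨hv, le_rfl⟩
  | succ k ih =>
    rw [Function.iterate_succ_apply']
    rcases ih with ⟨h1, h2⟩
    by_cases h : ∀ u ∈ T.verts, T.parent^[k] v ≤ u
    · rw [T.parent_root _ h1 h]; exact ⟨h1, h2⟩
    · push_neg at h
      obtain ⟨u, hu, hlt⟩ := h
      obtain ⟨m1, m2⟩ := parent_mem_lt T h1 hu hlt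
      exact ⟨m1, by omega⟩

lemma ancestor_refl (T : ITree) (v : ℕ) : Ancestor T v v := ⟨0, rfl⟩

lemma parent_ancestor (T : ITree) (v : ℕ) : Ancestor T (T.parent v) v := ⟨1, rfl⟩

lemma ancestor_trans {T : ITree} {a b c : ℕ} (h1 : Ancestor T a b) (h2 : Ancestor T b c) :
    Ancestor T a c := by
  obtain ⟨k, hk⟩ := h1; obtain ⟨l, hl⟩ := h2
  exact ⟨k + l, by rw [Function.iterate_add_apply, hl, hk]⟩

lemma ancestor_mem_le {T : ITree} {a v : ℕ} (h : Ancestor T a v) (hv : v ∈ T.verts) :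
    a ∈ T.verts ∧ a ≤ v := by
  obtain ⟨k, hk⟩ := h; exact hk ▸ iterate_mem_le T hv k

lemma ancestor_parent {T : ITree} {a v : ℕ} (h : Ancestor T a v) (hne : a ≠ v) :
    Ancestor T a (T.parent v) := by
  obtain ⟨k, hk⟩ := h
  cases k with
  | zero => exact absurd hk.symm hne
  | succ k => exact ⟨k, by rw [← Function.iterate_succ_apply]; exact hk⟩

lemma root_ancestor {T : ITree} {m : ℕ} (hm : m ∈ T.verts) (hmin : ∀ u ∈ T.verts, m ≤ u) :
    ∀ v ∈ T.verts, Ancestor T m v := by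
  intro v
  induction v using Nat.strong_induction_on with
  | _ v ih =>
    intro hv
    rcases eq_or_ne m v with rfl | hne
    · exact ancestor_refl T _
    · have hlt : m < v := lt_of_le_of_ne (hmin v hv) hne
      obtain ⟨h1, h2⟩ := parent_mem_lt T hv hm hlt
      exact ancestor_trans (ih _ h2 h1) (parent_ancestor T v)

lemma mem_chain {T : ITree} {a v : ℕ} :
    a ∈ chain T v ↔ a ∈ T.verts ∧ Ancestor T a v := Finset.mem_filter

lemma chain_comparable {T : ITree} {a b v : ℕ} (hv : v ∈ T.verts)
    (ha : a ∈ chain T v) (hb : b ∈ chain T v) (hab : a ≤ b) : Ancestor T a b := by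
  obtain ⟨haV, k, hk⟩ := mem_chain.1 ha
  obtain ⟨hbV, l, hl⟩ := mem_chain.1 hb
  rcases le_or_gt l k with h | h
  · refine ⟨k - l, ?_⟩
    rw [← hl, ← Function.iterate_add_apply, Nat.sub_add_cancel h, hk]
  · have : Ancestor T b a := ⟨l - k, by rw [← hk, ← Function.iterate_add_apply,
      Nat.sub_add_cancel h.le, hl]⟩
    have hba := (ancestor_mem_le this haV).2
    have : a = b := le_antisymm hab hba
    exact this ▸ ancestor_refl T a

lemma chain_parent_mem {T : ITree} {w v : ℕ} (hv : v ∈ T.verts) (hw : w ∈ chain T v)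
    {u : ℕ} (hu : u ∈ T.verts) (hult : u < w) :
    T.parent w ∈ chain T v ∧ T.parent w < w := by
  obtain ⟨hwV, k, hk⟩ := mem_chain.1 hw
  obtain ⟨h1, h2⟩ := parent_mem_lt T hwV hu hult
  refine ⟨mem_chain.2 ⟨h1, k + 1, ?_⟩, h2⟩
  rw [Function.iterate_succ_apply', hk]

lemma chain_parent_eq_max' {T : ITree} {w v : ℕ} (hv : v ∈ T.verts) (hw : w ∈ chain T v)
    (h : ((chain T v).filter (· < w)).Nonempty) :
    T.parent w = ((chain T v).filter (· < w)).max' h := by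
  obtain ⟨c, hc⟩ := h
  rw [Finset.mem_filter] at hc
  obtain ⟨hp1, hp2⟩ := chain_parent_mem hv hw (mem_chain.1 hc.1).1 hc.2
  apply le_antisymm
  · refine Finset.le_max' _ _ ?_
    rw [Finset.mem_filter]; exact ⟨hp1, hp2⟩
  · have hm := Finset.max'_mem ((chain T v).filter (· < w)) ⟨c, Finset.mem_filter.2 hc⟩
    rw [Finset.mem_filter] at hm
    have hanc : Ancestor T _ w := chain_comparable hv hm.1 hw hm.2.le
    have := ancestor_parent hanc (by omega)
    exact (ancestor_mem_le this (mem_chain.1 hp1).1).2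

lemma splice_chain {T T₁ T₂ : ITree} {V₁ : Finset ℕ} {v₁ v₂ : ℕ}
    (hsub : V₁ ⊆ T.verts) (hv₁ : v₁ ∈ V₁)
    (h1 : T₁.verts = V₁) (h2 : T₂.verts = T.verts \ V₁)
    (hv₂ : v₂ ∈ T.verts \ V₁) (hlt : v₂ < v₁)
    (hS : IsSplice T₁ v₁ T₂ v₂ T) :
    chain T v₁ = chain T₁ v₁ ∪ chain T₂ v₂ := by
  set D := chain T₁ v₁ ∪ chain T₂ v₂ with hD
  have hv₁T : v₁ ∈ T.verts := hsub hv₁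
  have hv₁1 : v₁ ∈ T₁.verts := h1 ▸ hv₁
  have hv₂2 : v₂ ∈ T₂.verts := h2 ▸ hv₂
  have hDsub : D ⊆ T.verts := by
    intro x hx
    rcases Finset.mem_union.1 hx with hx | hx
    · exact hsub (h1 ▸ (mem_chain.1 hx).1)
    · exact (Finset.mem_sdiff.1 (h2 ▸ (mem_chain.1 hx).1)).1
  have hDle : ∀ d ∈ D, d ≤ v₁ := by
    intro d hd
    rcases Finset.mem_union.1 hd with hd | hd
    · obtain ⟨hm, ha⟩ := mem_chain.1 hd
      exact (ancestor_mem_le ha hv₁1).2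
    · obtain ⟨hm, ha⟩ := mem_chain.1 hd
      exact le_trans (ancestor_mem_le ha hv₂2).2 hlt.le
  have hv₁D : v₁ ∈ D := Finset.mem_union_left _ (mem_chain.2 ⟨hv₁1, ancestor_refl T₁ v₁⟩)
  have hTne : T.verts.Nonempty := ⟨v₁, hv₁T⟩
  have hminD : T.verts.min' hTne ∈ D := by
    set m := T.verts.min' hTne with hm
    have hmT : m ∈ T.verts := T.verts.min'_mem hTne
    by_cases hmV : m ∈ V₁
    · refine Finset.mem_union_left _ (mem_chain.2 ⟨h1 ▸ hmV, ?_⟩)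
      refine root_ancestor (h1 ▸ hmV) ?_ v₁ hv₁1
      intro u hu
      exact T.verts.min'_le u (hsub (h1 ▸ hu))
    · have hmT2 : m ∈ T₂.verts := h2 ▸ Finset.mem_sdiff.2 ⟨hmT, hmV⟩
      refine Finset.mem_union_right _ (mem_chain.2 ⟨hmT2, ?_⟩)
      refine root_ancestor hmT2 ?_ v₂ hv₂2
      intro u hu
      exact T.verts.min'_le u (Finset.mem_sdiff.1 (h2 ▸ hu)).1
  have key : ∀ w, w ∈ D → ∀ d ∈ D, d ≤ w → Ancestor T d w := by
    intro w
    induction w using Nat.strong_induction_on with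
    | _ w ih =>
      intro hw d hd hdw
      rcases eq_or_lt_of_le hdw with rfl | hdw
      · exact ancestor_refl T d
      · have hfil : (D.filter (· < w)).Nonempty := ⟨d, by
          rw [Finset.mem_filter]; exact ⟨hd, hdw⟩⟩
        have hpw := hS.2.2.2 w hw hfil
        have hmax := (D.filter (· < w)).max'_mem hfil
        rw [Finset.mem_filter] at hmax
        have hdm : d ≤ (D.filter (· < w)).max' hfil := Finset.le_max' _ _ (by
          rw [Finset.mem_filter]; exact ⟨hd, hdw⟩)
        have ih' := ih _ hmax.2 hmax.1 d hd hdm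
        rw [← hpw] at ih'
        exact ancestor_trans ih' (parent_ancestor T w)
  apply Finset.Subset.antisymm
  · intro c hc
    obtain ⟨hcT, k, hk⟩ := mem_chain.1 hc
    suffices h : ∀ k, T.parent^[k] v₁ ∈ D by exact hk ▸ h k
    intro k
    induction k with
    | zero => exact hv₁D
    | succ k ihk =>
      rw [Function.iterate_succ_apply']
      set w := T.parent^[k] v₁ with hw
      by_cases hfil : (D.filter (· < w)).Nonempty
      · have hpw := hS.2.2.2 w ihk hfil
        rw [hpw]
        have := (D.filter (· < w)).max'_mem hfil
        rw [Finset.mem_filter] at this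
        exact this.1
      · have hwm : w = T.verts.min' hTne := by
          have h1' : T.verts.min' hTne ≤ w := T.verts.min'_le w (hDsub ihk)
          have h2' : ¬ (T.verts.min' hTne < w) := fun hlt' => hfil ⟨_, by
            rw [Finset.mem_filter]; exact ⟨hminD, hlt'⟩⟩
          omega
        rw [T.parent_root w (hDsub ihk) (fun u hu => hwm ▸ T.verts.min'_le u hu)]
        exact ihk
  · intro d hd
    exact mem_chain.2 ⟨hDsub hd, key v₁ hv₁D d hd (hDle d hd)⟩

lemma build_subtree (T : ITree) (v₁ : ℕ) (hv₁v : v₁ ∈ T.verts)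
    (W : Finset ℕ) (hW : W ⊆ T.verts) (hWne : W.Nonempty)
    (hminC : W.min' hWne ∈ chain T v₁)
    (hpar : ∀ w ∈ W, w ∉ chain T v₁ → T.parent w ∈ W)
    (t : ℕ) (htC : t ∈ chain T v₁) (htW : t ∈ W)
    (htmax : ∀ c ∈ chain T v₁, c ∈ W → c ≤ t) :
    ∃ T' : ITree, T'.verts = W ∧
      (∀ w, w ∉ chain T v₁ → T'.parent w = T.parent w) ∧
      chain T' t = (chain T v₁) ∩ W ∧
      (∀ a j, j ∈ W → (Ancestor T' a j ↔ (a ∈ W ∧ Ancestor T a j))) := by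
  classical
  set C := chain T v₁ with hC
  set CW := C ∩ W with hCW
  set p : ℕ → ℕ := fun w =>
    if w ∈ CW then
      (if h : ((CW).filter (· < w)).Nonempty then ((CW).filter (· < w)).max' h else w)
    else T.parent w with hp
  have hmW : W.min' hWne ∈ W := W.min'_mem hWne
  have hmCW : W.min' hWne ∈ CW := Finset.mem_inter.2 ⟨hminC, hmW⟩
  have hrootC : T.verts.min' ⟨v₁, hv₁v⟩ ∈ C := by
    refine mem_chain.2 ⟨T.verts.min'_mem _, root_ancestor (T.verts.min'_mem _)
      (fun u hu => T.verts.min'_le u hu) v₁ hv₁v⟩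
  -- parent facts
  have hpnotC : ∀ w, w ∉ C → p w = T.parent w := by
    intro w hw
    have : w ∉ CW := fun h => hw (Finset.mem_inter.1 h).1
    simp only [hp, if_neg this]
  have hstep : ∀ j ∈ W, p j ∈ W ∧ Ancestor T (p j) j ∧ (p j = j ∨ p j < j) := by
    intro j hj
    by_cases hjCW : j ∈ CW
    · by_cases hfil : ((CW).filter (· < j)).Nonempty
      · have hpj : p j = ((CW).filter (· < j)).max' hfil := by
          simp only [hp, if_pos hjCW, dif_pos hfil]
        have hmem := ((CW).filter (· < j)).max'_mem hfil
        rw [Finset.mem_filter] at hmem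
        obtain ⟨hm1, hm2⟩ := hmem
        rw [Finset.mem_inter] at hm1
        refine ⟨hpj ▸ hm1.2, hpj ▸ ?_, Or.inr (hpj ▸ hm2)⟩
        exact chain_comparable hv₁v hm1.1 (Finset.mem_inter.1 hjCW).1 hm2.le
      · have hpj : p j = j := by simp only [hp, if_pos hjCW, dif_neg hfil]
        rw [hpj]
        exact ⟨hj, ancestor_refl T j, Or.inl rfl⟩
    · have hjC : j ∉ C := fun h => hjCW (Finset.mem_inter.2 ⟨h, hj⟩)
      have hpj : p j = T.parent j := hpnotC j hjC
      have hjm : W.min' hWne < j := by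
        rcases eq_or_lt_of_le (W.min'_le j hj) with h | h
        · exact absurd (h ▸ hminC) hjC
        · exact h
      have := parent_mem_lt T (hW hj) (hW hmW) hjm
      exact ⟨hpj ▸ hpar j hj hjC, hpj ▸ parent_ancestor T j, Or.inr (hpj ▸ this.2)⟩
  -- root/lt proofs
  have hroot : ∀ v ∈ W, (∀ u ∈ W, v ≤ u) → p v = v := by
    intro v hv hall
    have hvm : v = W.min' hWne := le_antisymm (hall _ hmW) (W.min'_le v hv)
    have hvCW : v ∈ CW := hvm ▸ hmCW
    have hfil : ¬ ((CW).filter (· < v)).Nonempty := by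
      rintro ⟨c, hc⟩
      rw [Finset.mem_filter] at hc
      exact absurd (hall c (Finset.mem_inter.1 hc.1).2) (by omega)
    simp only [hp, if_pos hvCW, dif_neg hfil]
  have hplt : ∀ v ∈ W, ¬(∀ u ∈ W, v ≤ u) → p v ∈ W ∧ p v < v := by
    intro v hv hnall
    push_neg at hnall
    obtain ⟨u, hu, hulv⟩ := hnall
    have hmlt : W.min' hWne < v := lt_of_le_of_lt (W.min'_le u hu) hulv
    obtain ⟨hw1, hw2, hw3⟩ := hstep v hv
    refine ⟨hw1, ?_⟩
    rcases hw3 with h | h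
    · exfalso
      by_cases hvCW : v ∈ CW
      · have hfil : ((CW).filter (· < v)).Nonempty :=
          ⟨W.min' hWne, by rw [Finset.mem_filter]; exact ⟨hmCW, hmlt⟩⟩
        have hpj : p v = ((CW).filter (· < v)).max' hfil := by
          simp only [hp, if_pos hvCW, dif_pos hfil]
        have hmem := ((CW).filter (· < v)).max'_mem hfil
        rw [Finset.mem_filter] at hmem
        omega
      · have hjC : v ∉ C := fun hh => hvCW (Finset.mem_inter.2 ⟨hh, hv⟩)
        have hpj : p v = T.parent v := hpnotC v hjC
        have := parent_mem_lt T (hW hv) (hW hmW) hmlt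
        omega
    · exact h
  set T' : ITree := ⟨W, p, fun v hv => T.pos v (hW hv), hroot, hplt⟩ with hT'
  have hfwd : ∀ k j, j ∈ W → T'.parent^[k] j ∈ W ∧ Ancestor T (T'.parent^[k] j) j := by
    intro k j hj
    induction k with
    | zero => exact ⟨hj, ancestor_refl T j⟩
    | succ k ihk =>
      rw [Function.iterate_succ_apply']
      obtain ⟨ih1, ih2⟩ := ihk
      obtain ⟨hs1, hs2, _⟩ := hstep _ ih1
      exact ⟨hs1, ancestor_trans hs2 ih2⟩
  have hback : ∀ j, j ∈ W → ∀ a ∈ W, Ancestor T a j → Ancestor T' a j := by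
    intro j
    induction j using Nat.strong_induction_on with
    | _ j ih =>
      intro hj a ha hanc
      rcases eq_or_ne a j with rfl | hne
      · exact ancestor_refl T' a
      · have haj : a < j := lt_of_le_of_ne (ancestor_mem_le hanc (hW hj)).2 hne
        by_cases hjCW : j ∈ CW
        · have hjC := (Finset.mem_inter.1 hjCW).1
          have haC : a ∈ C := mem_chain.2 ⟨hW ha, ancestor_trans hanc (mem_chain.1 hjC).2⟩
          have haCW : a ∈ CW := Finset.mem_inter.2 ⟨haC, ha⟩
          have hfil : ((CW).filter (· < j)).Nonempty :=
            ⟨a, by rw [Finset.mem_filter]; exact ⟨haCW, haj⟩⟩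
          have hpj : p j = (CW.filter (· < j)).max' hfil := by
            simp only [hp, if_pos hjCW, dif_pos hfil]
          have hmem := (CW.filter (· < j)).max'_mem hfil
          rw [Finset.mem_filter] at hmem
          have hale : a ≤ (CW.filter (· < j)).max' hfil :=
            Finset.le_max' _ _ (by rw [Finset.mem_filter]; exact ⟨haCW, haj⟩)
          have hpjW : p j ∈ W := by rw [hpj]; exact (Finset.mem_inter.1 hmem.1).2
          have hanc2 : Ancestor T a (p j) := by
            rw [hpj]
            exact chain_comparable hv₁v haC (Finset.mem_inter.1 hmem.1).1 hale
          have hlt2 : p j < j := by rw [hpj]; exact hmem.2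
          exact ancestor_trans (ih _ hlt2 hpjW a ha hanc2) ⟨1, rfl⟩
        · have hjC : j ∉ C := fun hh => hjCW (Finset.mem_inter.2 ⟨hh, hj⟩)
          have hpj : p j = T.parent j := hpnotC j hjC
          have hjm : W.min' hWne < j := lt_of_le_of_lt (W.min'_le a ha) haj
          have hplt' := parent_mem_lt T (hW hj) (hW hmW) hjm
          have hpjW : p j ∈ W := by rw [hpj]; exact hpar j hj hjC
          have hanc2 : Ancestor T a (p j) := by rw [hpj]; exact ancestor_parent hanc hne
          have hlt2 : p j < j := by rw [hpj]; exact hplt'.2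
          exact ancestor_trans (ih _ hlt2 hpjW a ha hanc2) ⟨1, rfl⟩
  have htrans : ∀ a j, j ∈ W → (Ancestor T' a j ↔ (a ∈ W ∧ Ancestor T a j)) := by
    intro a j hj
    constructor
    · rintro ⟨k, hk⟩
      obtain ⟨h1', h2'⟩ := hfwd k j hj
      rw [hk] at h1' h2'
      exact ⟨h1', h2'⟩
    · rintro ⟨haW, hanc⟩
      exact hback j hj a haW hanc
  have hchain : chain T' t = CW := by
    apply Finset.Subset.antisymm
    · intro x hx
      obtain ⟨hxW, hanc⟩ := mem_chain.1 hx
      have hxW' : x ∈ W := hxW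
      have := (htrans x t htW).1 hanc
      exact Finset.mem_inter.2 ⟨mem_chain.2 ⟨hW this.1,
        ancestor_trans this.2 (mem_chain.1 htC).2⟩, this.1⟩
    · intro c hc
      obtain ⟨hcC, hcW⟩ := Finset.mem_inter.1 hc
      have hanc : Ancestor T c t := chain_comparable hv₁v hcC htC (htmax c hcC hcW)
      exact mem_chain.2 ⟨hcW, (htrans c t htW).2 ⟨hcW, hanc⟩⟩
  exact ⟨T', rfl, hpnotC, hchain, htrans⟩

lemma one_sided {π : Finset (Finset ℕ)} {V₁ : Finset ℕ}
    (hπ : IsPartition π)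
    (hblocks : ∀ v ∈ V₁, ∃ B ∈ π, v ∈ B ∧ B ⊆ V₁)
    {B : Finset ℕ} (hB : B ∈ π) {b : ℕ} (hbB : b ∈ B) (hbV : b ∈ V₁) : B ⊆ V₁ := by
  obtain ⟨B₀, hB₀π, hbB₀, hB₀V⟩ := hblocks b hbV
  rcases eq_or_ne B B₀ with rfl | hne
  · exact hB₀V
  · exact absurd hbB₀ (Finset.disjoint_left.1 (hπ.2.2 B hB B₀ hB₀π hne) hbB)

lemma hit_side {π : Finset (Finset ℕ)} {T : ITree} {V₁ : Finset ℕ} {v₁ : ℕ}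
    (hπ : IsPartition π) (hT : PiIncreasing π T)
    (hblocks : ∀ v ∈ V₁, ∃ B ∈ π, v ∈ B ∧ B ⊆ V₁)
    (hcl : ∀ B ∈ π, B ⊆ V₁ → ∀ B' ∈ π, B' ⊆ T.verts →
      Relation.EqvGen (DepEdge π T v₁) B B' → B' ⊆ V₁) :
    ∀ (k : ℕ) (w : ℕ), w ∈ T.verts → T.parent^[k] w ∈ chain T v₁ →
      (∀ j, j < k → T.parent^[j] w ∉ chain T v₁) →
      ((w ∈ V₁ ↔ T.parent^[k] w ∈ V₁) ∧
        ∀ c, Ancestor T c v₁ → Ancestor T c w → c ≤ T.parent^[k] w) := by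
  intro k w hw hkC hjC
  rcases Nat.eq_zero_or_pos k with rfl | hk
  · constructor
    · simp only [Function.iterate_zero_apply]
    · intro c _ h2
      simpa using (ancestor_mem_le h2 hw).2
  · have hwC : w ∉ chain T v₁ := by simpa using hjC 0 hk
    obtain ⟨B, hBπ, hwB, hBsub⟩ := hT.1 w hw
    have hBne : B.Nonempty := hπ.1 B hBπ
    set μ := B.max' hBne with hμ
    have hμB : μ ∈ B := B.max'_mem hBne
    have hμT : μ ∈ T.verts := hBsub hμB
    have hwμ : Ancestor T w μ := hT.2 B hBπ hBsub w hwB μ hμB (B.le_max' w hwB)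
    obtain ⟨m, hm⟩ := hwμ
    have claim1 : ∀ j, j ≤ m → T.parent^[j] μ ∉ chain T v₁ := by
      intro j hjm hC
      obtain ⟨hcT, hcanc⟩ := mem_chain.1 hC
      have hwc : Ancestor T w (T.parent^[j] μ) :=
        ⟨m - j, by rw [← Function.iterate_add_apply, Nat.sub_add_cancel hjm]; exact hm⟩
      exact hwC (mem_chain.2 ⟨hw, ancestor_trans hwc hcanc⟩)
    have hfk : T.parent^[k + m] μ = T.parent^[k] w := by
      rw [Function.iterate_add_apply, hm]
    set f := T.parent^[k] w with hf
    have hfT : f ∈ T.verts := (mem_chain.1 hkC).1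
    have claim2 : ∀ c, Ancestor T c v₁ → Ancestor T c μ → c ≤ f := by
      intro c h1 h3
      obtain ⟨j, hj⟩ := h3
      have hcT : c ∈ T.verts := hj ▸ (iterate_mem_le T hμT j).1
      have hcC : c ∈ chain T v₁ := mem_chain.2 ⟨hcT, h1⟩
      have hjm : ¬ j ≤ m := fun hh => claim1 j hh (by rw [hj]; exact hcC)
      have hjw : T.parent^[j - m] w = c := by
        rw [← hm, ← Function.iterate_add_apply, Nat.sub_add_cancel (by omega)]
        exact hj
      have hjk : ¬ (j - m < k) := fun hh => hjC (j - m) hh (by rw [hjw]; exact hcC)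
      have hancf : Ancestor T c f := ⟨j - m - k, by
        rw [hf, ← Function.iterate_add_apply, Nat.sub_add_cancel (by omega)]
        exact hjw⟩
      exact (ancestor_mem_le hancf hfT).2
    obtain ⟨B', hB'π, hfB', hB'sub⟩ := hT.1 f hfT
    have hedge : DepEdge π T v₁ B B' := by
      refine ⟨hBπ, hB'π, hBsub, hB'sub, hBne, ?_, f, hfB', (mem_chain.1 hkC).2,
        ⟨k + m, hfk⟩, claim2⟩
      intro hanc
      exact claim1 0 (Nat.zero_le m) (by simpa using mem_chain.2 ⟨hμT, hanc⟩)
    constructor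
    · constructor
      · intro hwV
        have hBV : B ⊆ V₁ := one_sided hπ hblocks hBπ hwB hwV
        exact (hcl B hBπ hBV B' hB'π hB'sub (Relation.EqvGen.rel _ _ hedge)) hfB'
      · intro hfV
        have hB'V : B' ⊆ V₁ := one_sided hπ hblocks hB'π hfB' hfV
        exact (hcl B' hB'π hB'V B hBπ hBsub
          (Relation.EqvGen.symm _ _ (Relation.EqvGen.rel _ _ hedge))) hwB
    · intro c h1 h2
      exact claim2 c h1 (ancestor_trans h2 ⟨m, hm⟩)

lemma chain_parent_det {T' : ITree} {t w : ℕ} (ht : t ∈ T'.verts) (hw : w ∈ chain T' t) :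
    T'.parent w = if h : ((chain T' t).filter (· < w)).Nonempty then
      ((chain T' t).filter (· < w)).max' h else w := by
  by_cases h : ((chain T' t).filter (· < w)).Nonempty
  · rw [dif_pos h]
    exact chain_parent_eq_max' ht hw h
  · rw [dif_neg h]
    have hwT : w ∈ T'.verts := (mem_chain.1 hw).1
    have hm : T'.verts.min' ⟨t, ht⟩ ∈ chain T' t :=
      mem_chain.2 ⟨T'.verts.min'_mem _, root_ancestor (T'.verts.min'_mem _)
        (fun u hu => T'.verts.min'_le u hu) t ht⟩
    have hwm : w ≤ T'.verts.min' ⟨t, ht⟩ := by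
      by_contra hc
      exact h ⟨_, Finset.mem_filter.2 ⟨hm, by omega⟩⟩
    exact T'.parent_root w hwT (fun u hu => le_trans hwm (T'.verts.min'_le u hu))

lemma splice_chain_parts {T T₁ T₂ : ITree} {V₁ : Finset ℕ} {v₁ v₂ : ℕ}
    (hsub : V₁ ⊆ T.verts) (hv₁ : v₁ ∈ V₁)
    (h1 : T₁.verts = V₁) (h2 : T₂.verts = T.verts \ V₁)
    (hv₂ : v₂ ∈ T.verts \ V₁) (hlt : v₂ < v₁)
    (hS : IsSplice T₁ v₁ T₂ v₂ T) :
    chain T₁ v₁ = (chain T v₁) ∩ V₁ ∧ chain T₂ v₂ = (chain T v₁) \ V₁ ∧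
      Ancestor T v₂ v₁ ∧ (∀ w ∈ T.verts \ V₁, Ancestor T w v₁ → w ≤ v₂) := by
  have hCh := splice_chain hsub hv₁ h1 h2 hv₂ hlt hS
  have hC₁V : ∀ x ∈ chain T₁ v₁, x ∈ V₁ := fun x hx => h1 ▸ (mem_chain.1 hx).1
  have hC₂V : ∀ x ∈ chain T₂ v₂, x ∉ V₁ := fun x hx =>
    (Finset.mem_sdiff.1 (h2 ▸ (mem_chain.1 hx).1)).2
  have e1 : chain T₁ v₁ = (chain T v₁) ∩ V₁ := by
    apply Finset.Subset.antisymm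
    · intro x hx
      exact Finset.mem_inter.2 ⟨hCh ▸ Finset.mem_union_left _ hx, hC₁V x hx⟩
    · intro x hx
      obtain ⟨hxC, hxV⟩ := Finset.mem_inter.1 hx
      rcases Finset.mem_union.1 (hCh ▸ hxC) with h | h
      · exact h
      · exact absurd hxV (hC₂V x h)
  have e2 : chain T₂ v₂ = (chain T v₁) \ V₁ := by
    apply Finset.Subset.antisymm
    · intro x hx
      exact Finset.mem_sdiff.2 ⟨hCh ▸ Finset.mem_union_right _ hx, hC₂V x hx⟩
    · intro x hx
      obtain ⟨hxC, hxV⟩ := Finset.mem_sdiff.1 hx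
      rcases Finset.mem_union.1 (hCh ▸ hxC) with h | h
      · exact absurd (hC₁V x h) hxV
      · exact h
  have hv₂2 : v₂ ∈ T₂.verts := h2 ▸ hv₂
  have hv₂c : v₂ ∈ chain T₂ v₂ := mem_chain.2 ⟨hv₂2, ancestor_refl T₂ v₂⟩
  refine ⟨e1, e2, ?_, ?_⟩
  · have := e2 ▸ hv₂c
    exact (mem_chain.1 (Finset.mem_sdiff.1 this).1).2
  · intro w hw hanc
    have hwc : w ∈ chain T₂ v₂ := by
      rw [e2]
      exact Finset.mem_sdiff.2 ⟨mem_chain.2 ⟨(Finset.mem_sdiff.1 hw).1, hanc⟩,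
        (Finset.mem_sdiff.1 hw).2⟩
    exact (ancestor_mem_le (mem_chain.1 hwc).2 hv₂2).2

lemma chain_parent_det' {T' : ITree} {t w : ℕ} (ht : t ∈ T'.verts) (hw : w ∈ chain T' t)
    (s : Finset ℕ) (hs : chain T' t = s) :
    T'.parent w = if h : (s.filter (· < w)).Nonempty then (s.filter (· < w)).max' h else w := by
  subst hs
  exact chain_parent_det ht hw

end Aux

/-- **Lemma 3.8 of Féray–Goulden–Lascoux.**  Let `T` be a `π`-increasing tree,
`V₁` a nonempty proper subset of `V(T)` that is a union of blocks of `π`, and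
`v₁ ∈ V₁`.  Then `T` can be written as `T = splice(T₁, v₁; T₂, v₂)` for
`π`-increasing trees `T₁`, `T₂` with vertex sets `V₁` and `V(T) \ V₁` and
some vertex `v₂ ∈ V(T) \ V₁`, if and only if `V₁` is a union of vertex sets
of connected components of the `v₁`-dependence graph `G_{v₁}(T)`.  In that
case `T₁`, `T₂` and `v₂` are unique, and `v₂` is the first element of
`V(T) \ V₁` on the chain from `v₁` to the root of `T` (the largest element of
`V(T) \ V₁` that is an ancestor of `v₁`). -/
theorem splice_decomposition_criterion (π : Finset (Finset ℕ)) (T : ITree)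
    (hπ : IsPartition π) (hT : PiIncreasing π T)
    (V₁ : Finset ℕ) (hne : V₁.Nonempty) (hsub : V₁ ⊆ T.verts) (hprop : V₁ ≠ T.verts)
    (hblocks : ∀ v ∈ V₁, ∃ B ∈ π, v ∈ B ∧ B ⊆ V₁)
    (v₁ : ℕ) (hv₁ : v₁ ∈ V₁) :
    ((∃ (T₁ T₂ : ITree) (v₂ : ℕ),
        PiIncreasing π T₁ ∧ PiIncreasing π T₂ ∧
        T₁.verts = V₁ ∧ T₂.verts = T.verts \ V₁ ∧
        v₂ ∈ T.verts \ V₁ ∧ v₂ < v₁ ∧ IsSplice T₁ v₁ T₂ v₂ T) ↔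
      (∀ B ∈ π, B ⊆ V₁ → ∀ B' ∈ π, B' ⊆ T.verts →
        Relation.EqvGen (DepEdge π T v₁) B B' → B' ⊆ V₁)) ∧
    (∀ (T₁ T₂ : ITree) (v₂ : ℕ) (T₁' T₂' : ITree) (v₂' : ℕ),
      T₁.verts = V₁ → T₂.verts = T.verts \ V₁ → v₂ ∈ T.verts \ V₁ → v₂ < v₁ →
      IsSplice T₁ v₁ T₂ v₂ T →
      T₁'.verts = V₁ → T₂'.verts = T.verts \ V₁ → v₂' ∈ T.verts \ V₁ → v₂' < v₁ →
      IsSplice T₁' v₁ T₂' v₂' T →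
        (∀ w ∈ V₁, T₁'.parent w = T₁.parent w) ∧
        (∀ w ∈ T.verts \ V₁, T₂'.parent w = T₂.parent w) ∧
        v₂' = v₂ ∧
        (Ancestor T v₂ v₁ ∧ ∀ w ∈ T.verts \ V₁, Ancestor T w v₁ → w ≤ v₂)) := by
  classical
  have hv₁T : v₁ ∈ T.verts := hsub hv₁
  constructor
  · constructor
    · -- forward direction
      rintro ⟨T₁, T₂, v₂, hP1, hP2, h1, h2, hv₂, hlt, hS⟩
      have hCh := splice_chain hsub hv₁ h1 h2 hv₂ hlt hS
      have hv₁1 : v₁ ∈ T₁.verts := by rw [h1]; exact hv₁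
      have hv₂2 : v₂ ∈ T₂.verts := by rw [h2]; exact hv₂
      have hV₂ne : (T.verts \ V₁).Nonempty := ⟨v₂, hv₂⟩
      have hmin1 : V₁.min' hne ∈ chain T₁ v₁ := by
        refine mem_chain.2 ⟨by rw [h1]; exact V₁.min'_mem hne, ?_⟩
        refine root_ancestor (by rw [h1]; exact V₁.min'_mem hne) ?_ v₁ hv₁1
        intro u hu
        rw [h1] at hu
        exact V₁.min'_le u hu
      have hmin1T : V₁.min' hne ∈ chain T v₁ := by
        rw [hCh]; exact Finset.mem_union_left _ hmin1
      have hmin2 : (T.verts \ V₁).min' hV₂ne ∈ chain T₂ v₂ := by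
        refine mem_chain.2 ⟨by rw [h2]; exact (T.verts \ V₁).min'_mem hV₂ne, ?_⟩
        refine root_ancestor (by rw [h2]; exact (T.verts \ V₁).min'_mem hV₂ne) ?_ v₂ hv₂2
        intro u hu
        rw [h2] at hu
        exact (T.verts \ V₁).min'_le u hu
      have hmin2T : (T.verts \ V₁).min' hV₂ne ∈ chain T v₁ := by
        rw [hCh]; exact Finset.mem_union_right _ hmin2
      have hF1 : ∀ w ∈ T.verts, w ∉ chain T v₁ →
          ((T.parent w ∈ V₁ ↔ w ∈ V₁) ∧ T.parent w ∈ T.verts) := by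
        intro w hw hwC
        have hnD : w ∉ chain T₁ v₁ ∪ chain T₂ v₂ := by rw [← hCh]; exact hwC
        by_cases hwV : w ∈ V₁
        · have hw1 : w ∈ T₁.verts := by rw [h1]; exact hwV
          have hpw : T.parent w = T₁.parent w := hS.2.1 w hw1 hnD
          have hmlt : V₁.min' hne < w := by
            rcases eq_or_lt_of_le (V₁.min'_le w hwV) with h | h
            · exact absurd (h ▸ hmin1T) hwC
            · exact h
          have hpm := parent_mem_lt T₁ hw1 (by rw [h1]; exact V₁.min'_mem hne) hmlt
          have hpV : T.parent w ∈ V₁ := by rw [hpw, ← h1]; exact hpm.1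
          exact ⟨iff_of_true hpV hwV, hsub hpV⟩
        · have hwV₂ : w ∈ T.verts \ V₁ := Finset.mem_sdiff.2 ⟨hw, hwV⟩
          have hw2 : w ∈ T₂.verts := by rw [h2]; exact hwV₂
          have hpw : T.parent w = T₂.parent w := hS.2.2.1 w hw2 hnD
          have hmlt : (T.verts \ V₁).min' hV₂ne < w := by
            rcases eq_or_lt_of_le ((T.verts \ V₁).min'_le w hwV₂) with h | h
            · exact absurd (h ▸ hmin2T) hwC
            · exact h
          have hpm := parent_mem_lt T₂ hw2
            (by rw [h2]; exact (T.verts \ V₁).min'_mem hV₂ne) hmlt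
          have hpV₂ : T.parent w ∈ T.verts \ V₁ := by rw [hpw, ← h2]; exact hpm.1
          rw [Finset.mem_sdiff] at hpV₂
          exact ⟨iff_of_false hpV₂.2 hwV, hpV₂.1⟩
      have hF2 : ∀ (k w : ℕ), w ∈ T.verts → (∀ j, j < k → T.parent^[j] w ∉ chain T v₁) →
          ((T.parent^[k] w ∈ V₁ ↔ w ∈ V₁) ∧ T.parent^[k] w ∈ T.verts) := by
        intro k
        induction k with
        | zero =>
          intro w hw _
          constructor
          · simp only [Function.iterate_zero_apply]
          · simpa using hw
        | succ k ih =>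
          intro w hw hj
          have ihk := ih w hw (fun j hjk => hj j (by omega))
          rw [Function.iterate_succ_apply']
          have hkC : T.parent^[k] w ∉ chain T v₁ := hj k (by omega)
          have hh := hF1 _ ihk.2 hkC
          exact ⟨hh.1.trans ihk.1, hh.2⟩
      have hF3 : ∀ B B', DepEdge π T v₁ B B' → (B ⊆ V₁ ↔ B' ⊆ V₁) := by
        rintro B B' ⟨hBπ, hB'π, hBs, hB's, hBne, hnanc, a, haB', hav₁, hanμ, hmaxa⟩
        have hμB : B.max' hBne ∈ B := B.max'_mem hBne
        have hμT : B.max' hBne ∈ T.verts := hBs hμB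
        have haT : a ∈ T.verts := (ancestor_mem_le hav₁ hv₁T).1
        have haC : a ∈ chain T v₁ := mem_chain.2 ⟨haT, hav₁⟩
        obtain ⟨ka, hka⟩ := hanμ
        have hex : ∃ k, T.parent^[k] (B.max' hBne) ∈ chain T v₁ :=
          ⟨ka, by rw [hka]; exact haC⟩
        have hk₀ := Nat.find_spec hex
        have hF2' := hF2 (Nat.find hex) (B.max' hBne) hμT (fun j hj => Nat.find_min hex hj)
        have hfa : T.parent^[Nat.find hex] (B.max' hBne) ≤ a :=
          hmaxa _ (mem_chain.1 hk₀).2 ⟨Nat.find hex, rfl⟩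
        have hk₀ka : Nat.find hex ≤ ka := Nat.find_min' hex (by rw [hka]; exact haC)
        have haf : Ancestor T a (T.parent^[Nat.find hex] (B.max' hBne)) :=
          ⟨ka - Nat.find hex, by
            rw [← Function.iterate_add_apply, Nat.sub_add_cancel hk₀ka]; exact hka⟩
        have haf' : a ≤ T.parent^[Nat.find hex] (B.max' hBne) :=
          (ancestor_mem_le haf hF2'.2).2
        have hfeq : T.parent^[Nat.find hex] (B.max' hBne) = a := le_antisymm hfa haf'
        constructor
        · intro hBV
          have haV : a ∈ V₁ := by rw [← hfeq]; exact hF2'.1.mpr (hBV hμB)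
          exact one_sided hπ hblocks hB'π haB' haV
        · intro hB'V
          have hμV : B.max' hBne ∈ V₁ := hF2'.1.mp (by rw [hfeq]; exact hB'V haB')
          exact one_sided hπ hblocks hBπ hμB hμV
      have hiff : ∀ B B', Relation.EqvGen (DepEdge π T v₁) B B' → (B ⊆ V₁ ↔ B' ⊆ V₁) := by
        intro B B' h
        induction h with
        | rel x y hxy => exact hF3 x y hxy
        | refl x => exact Iff.rfl
        | symm x y _ ih => exact ih.symm
        | trans x y z _ _ ih1 ih2 => exact ih1.trans ih2
      intro B hBπ hBV B' hB'π hB's hEqv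
      exact (hiff B B' hEqv).1 hBV
    · -- backward direction
      intro hcl
      have hv₁C : v₁ ∈ chain T v₁ := mem_chain.2 ⟨hv₁T, ancestor_refl T v₁⟩
      have hrootC : T.verts.min' ⟨v₁, hv₁T⟩ ∈ chain T v₁ :=
        mem_chain.2 ⟨T.verts.min'_mem _, root_ancestor (T.verts.min'_mem _)
          (fun u hu => T.verts.min'_le u hu) v₁ hv₁T⟩
      have hexC : ∀ w ∈ T.verts, ∃ k, T.parent^[k] w ∈ chain T v₁ := by
        intro w hw
        obtain ⟨k, hk⟩ := root_ancestor (T.verts.min'_mem ⟨v₁, hv₁T⟩)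
          (fun u hu => T.verts.min'_le u hu) w hw
        exact ⟨k, by rw [hk]; exact hrootC⟩
      have HS := hit_side hπ hT hblocks hcl
      have hENT : ∀ w ∈ T.verts, w ∉ chain T v₁ →
          ∃ f ∈ chain T v₁, (w ∈ V₁ ↔ f ∈ V₁) ∧ f < w := by
        intro w hw hwC
        have hex := hexC w hw
        have hk₀ := Nat.find_spec hex
        have hs := HS (Nat.find hex) w hw hk₀ (fun j hj => Nat.find_min hex hj)
        refine ⟨T.parent^[Nat.find hex] w, hk₀, hs.1, ?_⟩
        have hle := (iterate_mem_le T hw (Nat.find hex)).2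
        rcases eq_or_lt_of_le hle with h | h
        · exact absurd (h ▸ hk₀) hwC
        · exact h
      obtain ⟨u, huT, huV⟩ := Finset.exists_of_ssubset (lt_of_le_of_ne hsub hprop)
      have hV₂ne : (T.verts \ V₁).Nonempty := ⟨u, Finset.mem_sdiff.2 ⟨huT, huV⟩⟩
      have hCVne : ((chain T v₁) \ V₁).Nonempty := by
        by_cases huC : u ∈ chain T v₁
        · exact ⟨u, Finset.mem_sdiff.2 ⟨huC, huV⟩⟩
        · obtain ⟨f, hfC, hiff, _⟩ := hENT u huT huC
          exact ⟨f, Finset.mem_sdiff.2 ⟨hfC, fun hf => huV (hiff.2 hf)⟩⟩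
      set v₂ := ((chain T v₁) \ V₁).max' hCVne with hv₂def
      have hv₂m := ((chain T v₁) \ V₁).max'_mem hCVne
      rw [Finset.mem_sdiff] at hv₂m
      obtain ⟨hv₂C, hv₂V⟩ := hv₂m
      have hv₂T : v₂ ∈ T.verts := (mem_chain.1 hv₂C).1
      have hv₂lt : v₂ < v₁ := by
        rcases eq_or_lt_of_le ((ancestor_mem_le (mem_chain.1 hv₂C).2 hv₁T).2) with h | h
        · rw [h] at hv₂V; exact absurd hv₁ hv₂V
        · exact h
      have hmin1C : V₁.min' hne ∈ chain T v₁ := by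
        by_contra h
        obtain ⟨f, hfC, hiff, hflt⟩ := hENT _ (hsub (V₁.min'_mem hne)) h
        have hfV : f ∈ V₁ := hiff.1 (V₁.min'_mem hne)
        exact absurd (V₁.min'_le f hfV) (by omega)
      have hmin2C : (T.verts \ V₁).min' hV₂ne ∈ chain T v₁ := by
        by_contra h
        have hm2 := (T.verts \ V₁).min'_mem hV₂ne
        rw [Finset.mem_sdiff] at hm2
        obtain ⟨f, hfC, hiff, hflt⟩ := hENT _ hm2.1 h
        have hfT : f ∈ T.verts := (mem_chain.1 hfC).1
        have hfV : f ∉ V₁ := fun hf => hm2.2 (hiff.2 hf)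
        exact absurd ((T.verts \ V₁).min'_le f (Finset.mem_sdiff.2 ⟨hfT, hfV⟩)) (by omega)
      have hparS : ∀ w ∈ T.verts, w ∉ chain T v₁ →
          ((T.parent w ∈ V₁ ↔ w ∈ V₁) ∧ T.parent w ∈ T.verts) := by
        intro w hw hwC
        have hex := hexC w hw
        have hk₀ := Nat.find_spec hex
        have hk₀pos : 0 < Nat.find hex := by
          rcases Nat.eq_zero_or_pos (Nat.find hex) with h | h
          · rw [h] at hk₀
            simp only [Function.iterate_zero_apply] at hk₀
            exact absurd hk₀ hwC
          · exact h
        have hmlt : T.verts.min' ⟨v₁, hv₁T⟩ < w := by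
          rcases eq_or_lt_of_le (T.verts.min'_le w hw) with h | h
          · exact absurd (h ▸ hrootC) hwC
          · exact h
        have hpT := parent_mem_lt T hw (T.verts.min'_mem _) hmlt
        have hs1 := HS (Nat.find hex) w hw hk₀ (fun j hj => Nat.find_min hex hj)
        have hiter : T.parent^[Nat.find hex - 1] (T.parent w) = T.parent^[Nat.find hex] w := by
          rw [← Function.iterate_succ_apply, Nat.succ_eq_add_one, Nat.sub_add_cancel hk₀pos]
        have hs2 := HS (Nat.find hex - 1) (T.parent w) hpT.1 (by rw [hiter]; exact hk₀)
          (fun j hj => by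
            rw [← Function.iterate_succ_apply]
            exact Nat.find_min hex (by omega))
        have hs2' := hs2.1
        rw [hiter] at hs2'
        exact ⟨hs2'.trans hs1.1.symm, hpT.1⟩
      obtain ⟨T₁, hT₁v, hT₁p, hT₁c, hT₁t⟩ := build_subtree T v₁ hv₁T V₁ hsub hne hmin1C
        (fun w hw hwC => ((hparS w (hsub hw) hwC).1).mpr hw) v₁ hv₁C hv₁
        (fun c hc _ => (ancestor_mem_le (mem_chain.1 hc).2 hv₁T).2)
      obtain ⟨T₂, hT₂v, hT₂p, hT₂c, hT₂t⟩ := build_subtree T v₁ hv₁T (T.verts \ V₁)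
        Finset.sdiff_subset hV₂ne hmin2C
        (fun w hw hwC => by
          rw [Finset.mem_sdiff] at hw
          exact Finset.mem_sdiff.2 ⟨(hparS w hw.1 hwC).2,
            fun hp => hw.2 ((hparS w hw.1 hwC).1.mp hp)⟩)
        v₂ hv₂C (Finset.mem_sdiff.2 ⟨hv₂T, hv₂V⟩)
        (fun c hc hcV => Finset.le_max' _ c
          (Finset.mem_sdiff.2 ⟨hc, (Finset.mem_sdiff.1 hcV).2⟩))
      have hPi1 : PiIncreasing π T₁ := by
        constructor
        · intro v hv
          rw [hT₁v] at hv
          obtain ⟨B, hBπ, hvB, hBV⟩ := hblocks v hv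
          exact ⟨B, hBπ, hvB, by rw [hT₁v]; exact hBV⟩
        · intro B hBπ hBs i hi j hj hij
          rw [hT₁v] at hBs
          have hanc : Ancestor T i j := hT.2 B hBπ (hBs.trans hsub) i hi j hj hij
          exact (hT₁t i j (hBs hj)).2 ⟨hBs hi, hanc⟩
      have hPi2 : PiIncreasing π T₂ := by
        constructor
        · intro v hv
          rw [hT₂v, Finset.mem_sdiff] at hv
          obtain ⟨B, hBπ, hvB, hBT⟩ := hT.1 v hv.1
          refine ⟨B, hBπ, hvB, ?_⟩
          rw [hT₂v]
          intro b hb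
          refine Finset.mem_sdiff.2 ⟨hBT hb, fun hbV => hv.2 ?_⟩
          exact (one_sided hπ hblocks hBπ hb hbV) hvB
        · intro B hBπ hBs i hi j hj hij
          rw [hT₂v] at hBs
          have hanc : Ancestor T i j :=
            hT.2 B hBπ (fun b hb => (Finset.mem_sdiff.1 (hBs hb)).1) i hi j hj hij
          exact (hT₂t i j (hBs hj)).2 ⟨hBs hi, hanc⟩
      have hDC : chain T₁ v₁ ∪ chain T₂ v₂ = chain T v₁ := by
        rw [hT₁c, hT₂c]
        apply Finset.Subset.antisymm
        · intro x hx
          rcases Finset.mem_union.1 hx with h | h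
          · exact (Finset.mem_inter.1 h).1
          · exact (Finset.mem_inter.1 h).1
        · intro x hx
          have hxT : x ∈ T.verts := (mem_chain.1 hx).1
          by_cases hxV : x ∈ V₁
          · exact Finset.mem_union_left _ (Finset.mem_inter.2 ⟨hx, hxV⟩)
          · exact Finset.mem_union_right _
              (Finset.mem_inter.2 ⟨hx, Finset.mem_sdiff.2 ⟨hxT, hxV⟩⟩)
      have hSplice : IsSplice T₁ v₁ T₂ v₂ T := by
        refine ⟨?_, ?_, ?_, ?_⟩
        · rw [hT₁v, hT₂v, Finset.union_sdiff_of_subset hsub]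
        · intro w hw hwD
          rw [hDC] at hwD
          exact (hT₁p w hwD).symm
        · intro w hw hwD
          rw [hDC] at hwD
          exact (hT₂p w hwD).symm
        · intro w hw h
          rw [hDC] at hw
          have key : ∀ (s : Finset ℕ) (hs : s = chain T v₁)
              (h' : (s.filter (· < w)).Nonempty),
              T.parent w = (s.filter (· < w)).max' h' := by
            rintro s rfl h'
            exact chain_parent_eq_max' hv₁T hw h'
          exact key _ hDC h
      exact ⟨T₁, T₂, v₂, hPi1, hPi2, hT₁v, hT₂v,
        Finset.mem_sdiff.2 ⟨hv₂T, hv₂V⟩, hv₂lt, hSplice⟩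
  · -- uniqueness
    intro T₁ T₂ v₂ T₁' T₂' v₂' h1 h2 hv₂ hlt hS h1' h2' hv₂' hlt' hS'
    obtain ⟨e1, e2, hanc, hmax⟩ := splice_chain_parts hsub hv₁ h1 h2 hv₂ hlt hS
    obtain ⟨e1', e2', hanc', hmax'⟩ := splice_chain_parts hsub hv₁ h1' h2' hv₂' hlt' hS'
    have hv2eq : v₂' = v₂ := le_antisymm (hmax v₂' hv₂' hanc') (hmax' v₂ hv₂ hanc)
    have hCh := splice_chain hsub hv₁ h1 h2 hv₂ hlt hS
    have hCh' := splice_chain hsub hv₁ h1' h2' hv₂' hlt' hS'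
    rw [hv2eq] at hS' e2' hCh' hv₂'
    refine ⟨?_, ?_, hv2eq, hanc, hmax⟩
    · intro w hw
      by_cases hwC : w ∈ chain T v₁
      · have hw1 : w ∈ chain T₁ v₁ := by rw [e1]; exact Finset.mem_inter.2 ⟨hwC, hw⟩
        have hw1' : w ∈ chain T₁' v₁ := by rw [e1']; exact Finset.mem_inter.2 ⟨hwC, hw⟩
        have d1 := chain_parent_det' (show v₁ ∈ T₁.verts by rw [h1]; exact hv₁) hw1 _ e1
        have d1' := chain_parent_det' (show v₁ ∈ T₁'.verts by rw [h1']; exact hv₁) hw1' _ e1'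
        exact d1'.trans d1.symm
      · have hnD : w ∉ chain T₁ v₁ ∪ chain T₂ v₂ := by rw [← hCh]; exact hwC
        have hnD' : w ∉ chain T₁' v₁ ∪ chain T₂' v₂ := by rw [← hCh']; exact hwC
        have p1 := hS.2.1 w (by rw [h1]; exact hw) hnD
        have p1' := hS'.2.1 w (by rw [h1']; exact hw) hnD'
        rw [← p1, ← p1']
    · intro w hw
      by_cases hwC : w ∈ chain T v₁
      · have hw2 : w ∈ chain T₂ v₂ := by
          rw [e2]; exact Finset.mem_sdiff.2 ⟨hwC, (Finset.mem_sdiff.1 hw).2⟩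
        have hw2' : w ∈ chain T₂' v₂ := by
          rw [e2']; exact Finset.mem_sdiff.2 ⟨hwC, (Finset.mem_sdiff.1 hw).2⟩
        have d2 := chain_parent_det' (show v₂ ∈ T₂.verts by rw [h2]; exact hv₂) hw2 _ e2
        have d2' := chain_parent_det' (show v₂ ∈ T₂'.verts by rw [h2']; exact hv₂) hw2' _ e2'
        exact d2'.trans d2.symm
      · have hnD : w ∉ chain T₁ v₁ ∪ chain T₂ v₂ := by rw [← hCh]; exact hwC
        have hnD' : w ∉ chain T₁' v₁ ∪ chain T₂' v₂ := by rw [← hCh']; exact hwC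
        have p2 := hS.2.2.1 w (by rw [h2]; exact hw) hnD
        have p2' := hS'.2.2.1 w (by rw [h2']; exact hw) hnD'
        rw [← p2, ← p2']
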